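/- Fix α ∈ (0,1) and set ξ₀ := −(1−α) log β / (λα). If ε ∈ (0, ξ₀), π ∈ 𝒫 is ε-optimal at x, and γ := J*(λ,x), then E_x^π[ exp( λα Σ_{t=0}^{T−1} (C(X_t,A_t) − γ) ) ] < ∞, where T is the first positive arrival time to z. -/

import Mathlib

open scoped Classical BigOperators ENNReal

namespace RiskSensitive

/-- A (history-dependent, randomized) policy for a finite MDP: given the past
(chronological list of (state, action) pairs) and the current state, it assigns a
probability weight to each action, concentrated on the admissible actions. -/
structure Policy (S A : Type*) [Fintype S] [Fintype A] (Adm : S → Finset A) where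
  toFun : List (S × A) → S → A → ℝ
  nonneg : ∀ h s a, 0 ≤ toFun h s a
  sum_one : ∀ h s, ∑ a, toFun h s a = 1
  supp : ∀ h s a, a ∉ Adm s → toFun h s a = 0

variable {S A : Type*} [Fintype S] [Fintype A]
variable (Adm : S → Finset A) (p : S → A → S → ℝ) (C : S → A → ℝ) (lam : ℝ)

/-- Probability of a finite trajectory (list of (action, next-state) pairs), given the
history so far and the current state. -/
noncomputable def pathProbAux (π : Policy S A Adm) :
    List (S × A) → S → List (A × S) → ℝ
  | _, _, [] => 1
  | hist, x, (a, y) :: rest =>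
      π.toFun hist x a * p x a y * pathProbAux π (hist ++ [(x, a)]) y rest

/-- `pathProb π x l` is `P_x^π[A_0 = a_0, X_1 = y_1, …]` for `l = [(a_0,y_1),…]`. -/
noncomputable def pathProb (π : Policy S A Adm) (x : S) (l : List (A × S)) : ℝ :=
  pathProbAux Adm p π [] x l

/-- Probability of a cylinder event depending on the first `n` (action, next-state) pairs. -/
noncomputable def cylProb (π : Policy S A Adm) (x : S) (n : ℕ)
    (E : (Fin n → A × S) → Prop) : ℝ :=
  ∑ v : Fin n → A × S, if E v then pathProb Adm p π x (List.ofFn v) else 0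

/-- The state `X_t` along the trajectory encoded by `l`, starting from `x`. -/
def stateAt (x : S) (l : List (A × S)) (t : ℕ) : S :=
  (l.take t).foldl (fun _ q => q.2) x

/-- The final state of the finite trajectory `l` started at `x`. -/
def lastState (x : S) (l : List (A × S)) : S :=
  l.foldl (fun _ q => q.2) x

/-- `Σ_t w(X_t, A_t)` along the finite trajectory `l` started at `x`. -/
def costSum (w : S → A → ℝ) : S → List (A × S) → ℝ
  | _, [] => 0
  | x, (a, y) :: rest => w x a + costSum w y rest

/-- `J_n(λ,π,x) = (1/λ) log E_x^π[exp(λ Σ_{t<n} C(X_t,A_t))]`. -/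
noncomputable def Jn (π : Policy S A Adm) (x : S) (n : ℕ) : ℝ :=
  (1 / lam) * Real.log (∑ v : Fin n → A × S,
    pathProb Adm p π x (List.ofFn v) * Real.exp (lam * costSum C x (List.ofFn v)))

/-- The risk-sensitive average cost `J(λ,π,x) = limsup_n J_n(λ,π,x)/n`. -/
noncomputable def Javg (π : Policy S A Adm) (x : S) : ℝ :=
  Filter.limsup (fun n : ℕ => Jn Adm p C lam π x n / n) Filter.atTop

/-- Optimal risk-sensitive average cost `J*(λ,x)`. -/
noncomputable def Jopt (x : S) : ℝ :=
  ⨅ π : Policy S A Adm, Javg Adm p C lam π x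

/-- `π` is `ε`-optimal at `x`. -/
def EpsOptimalAt (π : Policy S A Adm) (x : S) (ε : ℝ) : Prop :=
  Javg Adm p C lam π x ≤ Jopt Adm p C lam x + ε

/-- `FirstExit Q v` : the trajectory `v` leaves `{Q}` for the first time exactly at its
last step, i.e. the exit time of `Q` equals `n`. -/
def FirstExit (Q : S → Prop) {n : ℕ} (v : Fin n → A × S) : Prop :=
  0 < n ∧ (∀ t : Fin n, (t : ℕ) + 1 < n → Q (v t).2) ∧
    ∀ t : Fin n, (t : ℕ) + 1 = n → ¬ Q (v t).2

/-- `E_x^π[ exp(Σ_{t<τ} w(X_t,A_t)) ]` where `τ = min{n ≥ 1 : ¬ Q (X_n)}` is the first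
exit time from `Q` (the contribution of `[τ = ∞]` is null when `τ < ∞` a.s.). -/
noncomputable def EexitExp (π : Policy S A Adm) (x : S) (Q : S → Prop)
    (w : S → A → ℝ) : ℝ≥0∞ :=
  ∑' n : ℕ, ∑ v : Fin n → A × S,
    if FirstExit Q v then
      ENNReal.ofReal (pathProb Adm p π x (List.ofFn v) *
        Real.exp (costSum w x (List.ofFn v)))
    else 0

/-- `E_x^π[ exp(Σ_{t<T} w(X_t,A_t)) ]` with `T` the first positive arrival time to `z`. -/
noncomputable def EhitExp (π : Policy S A Adm) (x z : S) (w : S → A → ℝ) : ℝ≥0∞ :=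
  EexitExp Adm p π x (fun y => y ≠ z) w

/-- `E_x^π[T]`, the expected first positive arrival time to `z`, computed as
`Σ_{n≥0} P_x^π[T > n]`. -/
noncomputable def ExpT (π : Policy S A Adm) (x z : S) : ℝ≥0∞ :=
  ∑' n : ℕ, ENNReal.ofReal
    (cylProb Adm p π x n (fun v => ∀ t : Fin n, (v t).2 ≠ z))

/-- `P_x^π[T > n]`, the probability that `z` is not visited during the first `n` steps. -/
noncomputable def survProb (π : Policy S A Adm) (x z : S) (n : ℕ) : ℝ :=
  cylProb Adm p π x n (fun v => ∀ t : Fin n, (v t).2 ≠ z)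

/-- The stationary policy induced by a choice function `f ∈ 𝔽`. -/
noncomputable def stationary (f : S → A) (hf : ∀ s, f s ∈ Adm s) : Policy S A Adm where
  toFun := fun _ s a => if a = f s then 1 else 0
  nonneg := by intro h s a; (try dsimp only); split <;> norm_num
  sum_one := by intro h s; simp
  supp := by
    intro h s a ha
    try dsimp only
    rw [if_neg]
    intro hEq
    exact ha (hEq ▸ hf s)

/-- The simultaneous Doeblin condition: `E_x^f[T] ≤ M` for every state `x` and every
stationary policy `f`, where `T` is the first positive arrival time to `z`. -/
def Doeblin (z : S) (M : ℝ) : Prop :=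
  0 < M ∧ ∀ (x : S) (f : S → A) (hf : ∀ s, f s ∈ Adm s),
    ExpT Adm p (stationary Adm f hf) x z ≤ ENNReal.ofReal M

/-- `B_g(x) = {a ∈ A(x) : g(x) = max{g(y) : p_{xy}(a) > 0}}`. -/
def Bg (g : S → ℝ) (x : S) : Set A :=
  {a | a ∈ Adm x ∧ g x = sSup (g '' {y | 0 < p x a y})}

/-- The family `𝒢` of functions characterizing `J*(λ,·)`. -/
def Gclass : Set (S → ℝ) :=
  {g | (∀ x, g x = sInf ((fun a => sSup (g '' {y | 0 < p x a y})) '' (Adm x : Set A))) ∧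
    ∃ h : S → ℝ, ∀ x,
      sInf ((fun a => Real.exp (lam * C x a) * ∑ y, p x a y * Real.exp (lam * h y)) ''
        Bg Adm p g x) ≤ Real.exp (lam * g x + lam * h x)}

/-- The class `𝒫*` of policies which always select actions in `B*(X_t)`. -/
def Pstar : Set (Policy S A Adm) :=
  {π | ∀ (x : S) (t : ℕ),
    cylProb Adm p π x (t + 1)
      (fun v => (v (Fin.last t)).1 ∈
        Bg Adm p (Jopt Adm p C lam) (stateAt x (List.ofFn v) t)) = 1}

/-- The deviation function
`h(x) = inf_{π ∈ 𝒫*} (1/λ) log E_x^π[exp(λα Σ_{t<T}(C(X_t,A_t) − J*(λ,X_t)))]`. -/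
noncomputable def hdev (z : S) (α : ℝ) (x : S) : EReal :=
  ⨅ π ∈ Pstar Adm p C lam, ((lam⁻¹ : ℝ) : EReal) *
    ENNReal.log (EhitExp Adm p π x z
      (fun s a => lam * α * (C s a - Jopt Adm p C lam s)))

/-- `ψ(ε) = (1/λ) inf_{δ∈𝒫*} log E_z^δ[exp(λ Σ_{t<T}(C(X_t,A_t) − γ₀ − 2ε))]`. -/
noncomputable def psi (z : S) (ε : ℝ) : EReal :=
  ((lam⁻¹ : ℝ) : EReal) * ⨅ π ∈ Pstar Adm p C lam,
    ENNReal.log (EhitExp Adm p π z z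
      (fun s a => lam * (C s a - Jopt Adm p C lam z - 2 * ε)))

/-- `ξ₀ = −(1−α) log β / (λα)`. -/
noncomputable def xi0 (α β : ℝ) : ℝ := -((1 - α) * Real.log β) / (lam * α)

/-- `ξ₁`: 1 if `J*(λ,·)` is constant, otherwise the minimum gap between distinct
values of `J*(λ,·)`. -/
noncomputable def xi1 : ℝ :=
  if ∀ u v : S, Jopt Adm p C lam u = Jopt Adm p C lam v then 1
  else sInf {d | ∃ u v : S, Jopt Adm p C lam u < Jopt Adm p C lam v ∧
    d = Jopt Adm p C lam v - Jopt Adm p C lam u}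

/-- `ξ = min{ξ₀, ξ₁}`. -/
noncomputable def xi (α β : ℝ) : ℝ := min (xi0 lam α β) (xi1 Adm p C lam)

/-- The shifted policy obtained by prefixing the fixed history `pre`. -/
def shiftPolicy (π : Policy S A Adm) (pre : List (S × A)) : Policy S A Adm where
  toFun := fun h s a => π.toFun (pre ++ h) s a
  nonneg := fun h s a => π.nonneg _ s a
  sum_one := fun h s => π.sum_one _ s
  supp := fun h s a ha => π.supp _ s a ha

/-- The history (list of (state, action) pairs) along the trajectory `l` started at `x`. -/
def histOf : S → List (A × S) → List (S × A)
  | _, [] => []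
  | x, (a, y) :: rest => (x, a) :: histOf y rest


section Helpers

variable {S' A' : Type*} [Fintype S'] [Fintype A']
variable {Adm' : S' → Finset A'} {p' : S' → A' → S' → ℝ} {C' : S' → A' → ℝ}

lemma pathProbAux_nonneg
    (hp : ∀ (x : S'), ∀ a ∈ Adm' x, (∀ y, 0 ≤ p' x a y) ∧ (∑ y, p' x a y) = 1)
    (π : Policy S' A' Adm') :
    ∀ (l : List (A' × S')) (hist : List (S' × A')) (x : S'),
      0 ≤ pathProbAux Adm' p' π hist x l := by
  intro l
  induction l with
  | nil => intro hist x; simp [pathProbAux]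
  | cons q rest ih =>
      intro hist x
      obtain ⟨a, y⟩ := q
      by_cases ha : a ∈ Adm' x
      · exact mul_nonneg (mul_nonneg (π.nonneg _ _ _) ((hp x a ha).1 y)) (ih _ _)
      · simp [pathProbAux, π.supp _ _ _ ha]

lemma pathProbAux_append (π : Policy S' A' Adm') :
    ∀ (l l' : List (A' × S')) (hist : List (S' × A')) (x : S'),
      pathProbAux Adm' p' π hist x (l ++ l') =
        pathProbAux Adm' p' π hist x l *
          pathProbAux Adm' p' π (hist ++ histOf x l) (lastState x l) l' := by
  intro l
  induction l with
  | nil => intro l' hist x; simp [pathProbAux, histOf, lastState]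
  | cons q rest ih =>
      intro l' hist x
      obtain ⟨a, y⟩ := q
      simp only [List.cons_append, pathProbAux, histOf, List.append_eq]
      rw [ih l' (hist ++ [(x, a)]) y]
      rw [show hist ++ (x, a) :: histOf y rest = (hist ++ [(x, a)]) ++ histOf y rest by
        simp]
      rw [show lastState x ((a, y) :: rest) = lastState y rest from rfl]
      ring

lemma sum_single_step
    (hp : ∀ (x : S'), ∀ a ∈ Adm' x, (∀ y, 0 ≤ p' x a y) ∧ (∑ y, p' x a y) = 1)
    (π : Policy S' A' Adm') (hist : List (S' × A')) (x : S') :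
    ∑ q : A' × S', pathProbAux Adm' p' π hist x [q] = 1 := by
  rw [Fintype.sum_prod_type]
  have h : ∀ a : A', (∑ y : S', pathProbAux Adm' p' π hist x [(a, y)]) =
      π.toFun hist x a := by
    intro a
    by_cases ha : a ∈ Adm' x
    · simp only [pathProbAux, mul_one]
      rw [← Finset.mul_sum, (hp x a ha).2, mul_one]
    · simp [pathProbAux, π.supp _ _ _ ha]
  rw [Finset.sum_congr rfl fun a _ => h a]
  exact π.sum_one hist x

lemma sum_pathProbAux_snoc
    (hp : ∀ (x : S'), ∀ a ∈ Adm' x, (∀ y, 0 ≤ p' x a y) ∧ (∑ y, p' x a y) = 1)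
    (π : Policy S' A' Adm') (l : List (A' × S')) (hist : List (S' × A')) (x : S') :
    ∑ q : A' × S', pathProbAux Adm' p' π hist x (l ++ [q]) =
      pathProbAux Adm' p' π hist x l := by
  have h1 : ∀ q : A' × S', pathProbAux Adm' p' π hist x (l ++ [q]) =
      pathProbAux Adm' p' π hist x l *
        pathProbAux Adm' p' π (hist ++ histOf x l) (lastState x l) [q] :=
    fun q => pathProbAux_append π l [q] hist x
  rw [Finset.sum_congr rfl fun q _ => h1 q, ← Finset.mul_sum,
    sum_single_step hp π _ _, mul_one]

lemma sum_fn_succ {γ M : Type*} [Fintype γ] [AddCommMonoid M] (n : ℕ)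
    (F : (Fin (n + 1) → γ) → M) :
    ∑ v : Fin (n + 1) → γ, F v = ∑ u : Fin n → γ, ∑ q : γ, F (Fin.snoc u q) := by
  rw [← Equiv.sum_comp (Fin.snocEquiv (fun _ => γ)) F, Fintype.sum_prod_type,
    Finset.sum_comm]
  rfl

lemma ofFn_snoc' {γ : Type*} {n : ℕ} (u : Fin n → γ) (q : γ) :
    List.ofFn (Fin.snoc u q : Fin (n + 1) → γ) = List.ofFn u ++ [q] := by
  rw [List.ofFn_succ']
  simp [Fin.snoc_castSucc, Fin.snoc_last]

lemma sum_pathProb_snoc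
    (hp : ∀ (x : S'), ∀ a ∈ Adm' x, (∀ y, 0 ≤ p' x a y) ∧ (∑ y, p' x a y) = 1)
    (π : Policy S' A' Adm') (x : S') (n : ℕ) (u : Fin n → A' × S') :
    ∑ q : A' × S', pathProb Adm' p' π x (List.ofFn (Fin.snoc u q)) =
      pathProb Adm' p' π x (List.ofFn u) := by
  have h : ∀ q : A' × S', pathProb Adm' p' π x (List.ofFn (Fin.snoc u q)) =
      pathProbAux Adm' p' π [] x (List.ofFn u ++ [q]) := by
    intro q; rw [pathProb, ofFn_snoc']
  rw [Finset.sum_congr rfl fun q _ => h q]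
  exact sum_pathProbAux_snoc hp π _ _ _

lemma sum_pathProb_eq_one
    (hp : ∀ (x : S'), ∀ a ∈ Adm' x, (∀ y, 0 ≤ p' x a y) ∧ (∑ y, p' x a y) = 1)
    (π : Policy S' A' Adm') (x : S') :
    ∀ n : ℕ, ∑ v : Fin n → A' × S', pathProb Adm' p' π x (List.ofFn v) = 1 := by
  intro n
  induction n with
  | zero =>
      simp [pathProb, pathProbAux, List.ofFn_zero, Finset.card_univ]
  | succ n ih =>
      rw [sum_fn_succ n (fun v => pathProb Adm' p' π x (List.ofFn v)),
        Finset.sum_congr rfl fun u _ => sum_pathProb_snoc hp π x n u]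
      exact ih

lemma costSum_shift (c γ : ℝ) :
    ∀ (l : List (A' × S')) (x : S'),
      costSum (fun s a => c * (C' s a - γ)) x l = c * (costSum C' x l - γ * l.length) := by
  intro l
  induction l with
  | nil => intro x; simp [costSum]
  | cons q rest ih =>
      intro x
      obtain ⟨a, y⟩ := q
      simp only [costSum, ih y, List.length_cons]
      push_cast
      ring

lemma costSum_abs_le {Cm : ℝ} (hCm : ∀ s a, |C' s a| ≤ Cm) :
    ∀ (l : List (A' × S')) (x : S'), |costSum C' x l| ≤ Cm * l.length := by
  intro l
  induction l with
  | nil => intro x; simp [costSum]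
  | cons q rest ih =>
      intro x
      obtain ⟨a, y⟩ := q
      simp only [costSum, List.length_cons]
      calc |C' x a + costSum C' y rest| ≤ |C' x a| + |costSum C' y rest| := abs_add_le _ _
        _ ≤ Cm + Cm * rest.length := add_le_add (hCm x a) (ih y)
        _ = Cm * (rest.length + 1) := by ring
        _ = Cm * ((rest.length : ℕ) + 1 : ℕ) := by push_cast; ring

end Helpers

/-- if `ε ∈ (0, ξ₀)` and `π` is `ε`-optimal at `x`, then
`E_x^π[exp(λα Σ_{t<T}(C(X_t,A_t) − γ))] < ∞`, where `γ = J*(λ,x)`. -/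
theorem finite_hit_expectation_at_x
    (hA : ∀ x, (Adm x).Nonempty)
    (hp : ∀ (x : S), ∀ a ∈ Adm x, (∀ y, 0 ≤ p x a y) ∧ (∑ y, p x a y) = 1)
    (hlam : 0 < lam) (α : ℝ) (hα : α ∈ Set.Ioo (0 : ℝ) 1)
    (z : S) (M : ℝ) (hDoe : Doeblin Adm p z M)
    (β β₀ : ℝ) (hβ : β ∈ Set.Ioo (0 : ℝ) 1) (hβ₀ : 0 < β₀)
    (hTail : ∀ (x : S) (π : Policy S A Adm) (n : ℕ),
      survProb Adm p π x z n ≤ β₀ * β ^ (n + 1))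
    (ε : ℝ) (hε : ε ∈ Set.Ioo 0 (xi0 lam α β))
    (x : S) (π : Policy S A Adm) (hopt : EpsOptimalAt Adm p C lam π x ε) :
    EhitExp Adm p π x z
      (fun s a => lam * α * (C s a - Jopt Adm p C lam x)) < ⊤ := by
  classical
  obtain ⟨hε0, hεξ⟩ := hε
  obtain ⟨hα0, hα1⟩ := hα
  obtain ⟨hβpos, hβ1⟩ := hβ
  set γ := Jopt Adm p C lam x with hγdef
  -- bound on C
  obtain ⟨Cm₀, hCm₀⟩ := Finite.exists_le fun q : S × A => |C q.1 q.2|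
  set Cm := max Cm₀ 0 with hCmdef
  have hCm : ∀ s a, |C s a| ≤ Cm := fun s a => le_trans (hCm₀ (s, a)) (le_max_left _ _)
  have hCm0 : (0 : ℝ) ≤ Cm := le_max_right _ _
  have hPP : ∀ (x' : S) (l : List (A × S)), 0 ≤ pathProb Adm p π x' l :=
    fun x' l => pathProbAux_nonneg hp π l [] x'
  have hmass : ∀ n : ℕ, ∑ v : Fin n → A × S, pathProb Adm p π x (List.ofFn v) = 1 :=
    sum_pathProb_eq_one hp π x
  have hcost : ∀ (n : ℕ) (v : Fin n → A × S), |costSum C x (List.ofFn v)| ≤ Cm * n := by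
    intro n v
    have := costSum_abs_le hCm (List.ofFn v) x
    rwa [List.length_ofFn] at this
  set SA : ℕ → ℝ := fun n => ∑ v : Fin n → A × S,
    pathProb Adm p π x (List.ofFn v) * Real.exp (lam * costSum C x (List.ofFn v))
    with hSAdef
  have hSA_lb : ∀ n : ℕ, Real.exp (-(lam * (Cm * n))) ≤ SA n := by
    intro n
    have hterm : ∀ v : Fin n → A × S,
        pathProb Adm p π x (List.ofFn v) * Real.exp (-(lam * (Cm * n))) ≤
          pathProb Adm p π x (List.ofFn v) *
            Real.exp (lam * costSum C x (List.ofFn v)) := by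
      intro v
      refine mul_le_mul_of_nonneg_left ?_ (hPP _ _)
      apply Real.exp_le_exp.2
      have h1 := (abs_le.1 (hcost n v)).1
      nlinarith [hlam.le]
    calc Real.exp (-(lam * (Cm * n)))
        = (∑ v : Fin n → A × S, pathProb Adm p π x (List.ofFn v)) *
            Real.exp (-(lam * (Cm * n))) := by rw [hmass n, one_mul]
      _ = ∑ v : Fin n → A × S,
            pathProb Adm p π x (List.ofFn v) * Real.exp (-(lam * (Cm * n))) :=
            (Finset.sum_mul _ _ _)
      _ ≤ SA n := Finset.sum_le_sum fun v _ => hterm v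
  have hSA_ub : ∀ n : ℕ, SA n ≤ Real.exp (lam * (Cm * n)) := by
    intro n
    have hterm : ∀ v : Fin n → A × S,
        pathProb Adm p π x (List.ofFn v) * Real.exp (lam * costSum C x (List.ofFn v)) ≤
          pathProb Adm p π x (List.ofFn v) * Real.exp (lam * (Cm * n)) := by
      intro v
      refine mul_le_mul_of_nonneg_left ?_ (hPP _ _)
      apply Real.exp_le_exp.2
      have h1 := (abs_le.1 (hcost n v)).2
      nlinarith [hlam.le]
    calc SA n ≤ ∑ v : Fin n → A × S,
          pathProb Adm p π x (List.ofFn v) * Real.exp (lam * (Cm * n)) :=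
          Finset.sum_le_sum fun v _ => hterm v
      _ = (∑ v : Fin n → A × S, pathProb Adm p π x (List.ofFn v)) *
            Real.exp (lam * (Cm * n)) := (Finset.sum_mul _ _ _).symm
      _ = Real.exp (lam * (Cm * n)) := by rw [hmass n, one_mul]
  have hSApos : ∀ n : ℕ, 0 < SA n := fun n => lt_of_lt_of_le (Real.exp_pos _) (hSA_lb n)
  have hSAeq : ∀ n : ℕ, SA n = Real.exp (lam * Jn Adm p C lam π x n) := by
    intro n
    have hJ : Jn Adm p C lam π x n = (1 / lam) * Real.log (SA n) := rfl
    rw [hJ, show lam * (1 / lam * Real.log (SA n)) = Real.log (SA n) by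
      field_simp]
    exact (Real.exp_log (hSApos n)).symm
  -- boundedness of J_n/n
  have hJle : ∀ n : ℕ, Jn Adm p C lam π x n / n ≤ Cm := by
    intro n
    rcases Nat.eq_zero_or_pos n with h0 | hposn
    · subst h0; rw [Nat.cast_zero, div_zero]; exact hCm0
    · have hnp : (0 : ℝ) < n := by exact_mod_cast hposn
      have h1 : Real.exp (lam * Jn Adm p C lam π x n) ≤ Real.exp (lam * (Cm * n)) := by
        rw [← hSAeq n]; exact hSA_ub n
      have h2 : lam * Jn Adm p C lam π x n ≤ lam * (Cm * n) := Real.exp_le_exp.1 h1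
      have h3 : Jn Adm p C lam π x n ≤ Cm * n := le_of_mul_le_mul_left h2 hlam
      exact (div_le_iff₀ hnp).2 h3
  have hbdd : Filter.IsBoundedUnder (· ≤ ·) Filter.atTop
      (fun n : ℕ => Jn Adm p C lam π x n / n) :=
    ⟨Cm, Filter.eventually_map.2 (Filter.Eventually.of_forall hJle)⟩
  -- the margin δ and the threshold N
  set δ := (xi0 lam α β - ε) / 2 with hδdef
  have hδ0 : 0 < δ := by rw [hδdef]; linarith
  set c := γ + ε + δ with hc
  have hlt : Javg Adm p C lam π x < c := by
    refine lt_of_le_of_lt hopt ?_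
    rw [hc]; rw [← hγdef]; linarith
  have hev : ∀ᶠ n in Filter.atTop, Jn Adm p C lam π x n / n < c :=
    Filter.eventually_lt_of_limsup_lt hlt hbdd
  obtain ⟨N₀, hN₀⟩ := Filter.eventually_atTop.1 hev
  set N := max N₀ 1 with hNdef
  have hla : 0 < lam * α := mul_pos hlam hα0
  have hξ : lam * α * xi0 lam α β = -((1 - α) * Real.log β) := by
    rw [xi0]; field_simp
  -- geometric data
  set r := Real.exp (lam * α * (ε + δ)) * β ^ (1 - α) with hrdef
  set K := β₀ ^ (1 - α) with hKdef
  have hr0 : 0 ≤ r := mul_nonneg (Real.exp_pos _).le (Real.rpow_nonneg hβpos.le _)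
  have hK0 : 0 ≤ K := Real.rpow_nonneg hβ₀.le _
  have hr1 : r < 1 := by
    rw [hrdef, Real.rpow_def_of_pos hβpos, ← Real.exp_add, Real.exp_lt_one_iff]
    have hεδ : ε + δ < xi0 lam α β := by rw [hδdef]; linarith
    have h5 : lam * α * (ε + δ) < lam * α * xi0 lam α β :=
      mul_lt_mul_of_pos_left hεδ hla
    rw [hξ] at h5
    nlinarith
  -- the real-valued terms
  set T : ℕ → ℝ := fun n => ∑ v : Fin n → A × S,
    if FirstExit (fun y => y ≠ z) v then
      pathProb Adm p π x (List.ofFn v) *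
        Real.exp (costSum (fun s a => lam * α * (C s a - γ)) x (List.ofFn v))
    else 0 with hTdef
  have hT0 : ∀ n : ℕ, 0 ≤ T n := by
    intro n
    apply Finset.sum_nonneg
    intro v _
    split
    · exact mul_nonneg (hPP _ _) (Real.exp_pos _).le
    · exact le_refl 0
  -- the key geometric bound
  have hTb : ∀ n : ℕ, N ≤ n → T n ≤ K * r ^ n := by
    intro n hn
    have hn1 : 1 ≤ n := le_trans (le_max_right _ _) hn
    have hJn : Jn Adm p C lam π x n / n < c := hN₀ n (le_trans (le_max_left _ _) hn)
    have hnp : (0 : ℝ) < n := by exact_mod_cast hn1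
    have hJn' : Jn Adm p C lam π x n < c * n := (div_lt_iff₀ hnp).1 hJn
    have hSAn : SA n ≤ Real.exp (lam * (c * n)) := by
      rw [hSAeq n]
      exact Real.exp_le_exp.2 (by nlinarith [hlam.le])
    obtain ⟨m, rfl⟩ := Nat.exists_eq_succ_of_ne_zero (by omega : n ≠ 0)
    set n := m + 1
    set P : (Fin n → A × S) → ℝ := fun v => pathProb Adm p π x (List.ofFn v) with hPdef
    set cs : (Fin n → A × S) → ℝ := fun v => costSum C x (List.ofFn v) with hcsdef
    set Φ : (Fin n → A × S) → Prop := FirstExit (fun y => y ≠ z) with hΦdef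
    set D := Real.exp (-(lam * α * (γ * n))) with hDdef
    -- rewrite T n
    have hTn : T n = D * ∑ v : Fin n → A × S,
        if Φ v then P v * Real.exp (lam * α * cs v) else 0 := by
      rw [hTdef, Finset.mul_sum]
      refine Finset.sum_congr rfl fun v _ => ?_
      by_cases hΦv : Φ v
      · rw [if_pos hΦv, if_pos hΦv]
        rw [costSum_shift (lam * α) γ (List.ofFn v) x, List.length_ofFn]
        rw [show lam * α * (costSum C x (List.ofFn v) - γ * n) =
          lam * α * cs v + -(lam * α * (γ * n)) by rw [hcsdef]; ring]
        rw [Real.exp_add]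
        rw [hDdef, hPdef]
        ring
      · rw [if_neg hΦv, if_neg hΦv, mul_zero]
    -- the Hölder step on the first-exit set
    set s : Finset (Fin n → A × S) := Finset.univ.filter Φ with hsdef
    have hfilter : (∑ v : Fin n → A × S,
        if Φ v then P v * Real.exp (lam * α * cs v) else 0) =
        ∑ v ∈ s, P v * Real.exp (lam * α * cs v) := (Finset.sum_filter _ _).symm
    set f : (Fin n → A × S) → ℝ := fun v => (P v * Real.exp (lam * cs v)) ^ α with hfdef
    set g : (Fin n → A × S) → ℝ := fun v => P v ^ (1 - α) with hgdef
    have hfg : ∀ v, P v * Real.exp (lam * α * cs v) = f v * g v := by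
      intro v
      by_cases hPv : P v = 0
      · rw [hfdef, hgdef]
        simp only [hPv, zero_mul, mul_zero]
        rw [Real.zero_rpow (by linarith : (1:ℝ) - α ≠ 0), mul_zero]
      · have hPpos : 0 < P v := lt_of_le_of_ne (hPP _ _) (Ne.symm hPv)
        have hexp : (Real.exp (lam * cs v)) ^ α = Real.exp (lam * α * cs v) := by
          rw [← Real.exp_mul]; congr 1; ring
        calc P v * Real.exp (lam * α * cs v)
            = (P v ^ α * P v ^ (1 - α)) * Real.exp (lam * α * cs v) := by
              rw [← Real.rpow_add hPpos, show α + (1 - α) = (1 : ℝ) by ring,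
                Real.rpow_one]
          _ = (P v ^ α * Real.exp (lam * cs v) ^ α) * P v ^ (1 - α) := by
              rw [hexp]; ring
          _ = f v * g v := by
              rw [hfdef, hgdef]
              simp only
              rw [Real.mul_rpow hPpos.le (Real.exp_pos _).le]
    have hpq : Real.HolderConjugate (1 / α) (1 / (1 - α)) := by
      constructor
      · rw [one_div, one_div, inv_inv, inv_inv, inv_one]; ring
      · exact one_div_pos.2 hα0
      · exact one_div_pos.2 (by linarith)
    have hHold := Real.inner_le_Lp_mul_Lq s f g hpq
    have hfsimp : ∀ v, |f v| ^ (1 / α) = P v * Real.exp (lam * cs v) := by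
      intro v
      have hX0 : 0 ≤ P v * Real.exp (lam * cs v) :=
        mul_nonneg (hPP _ _) (Real.exp_pos _).le
      rw [hfdef]
      simp only
      rw [abs_of_nonneg (Real.rpow_nonneg hX0 α), ← Real.rpow_mul hX0,
        mul_one_div_cancel hα0.ne', Real.rpow_one]
    have hgsimp : ∀ v, |g v| ^ (1 / (1 - α)) = P v := by
      intro v
      have h1α : (1 : ℝ) - α ≠ 0 := by linarith
      rw [hgdef]
      simp only
      rw [abs_of_nonneg (Real.rpow_nonneg (hPP _ _) _), ← Real.rpow_mul (hPP _ _),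
        mul_one_div_cancel h1α, Real.rpow_one]
    rw [Finset.sum_congr rfl (fun v _ => hfsimp v),
      Finset.sum_congr rfl (fun v _ => hgsimp v)] at hHold
    rw [one_div_one_div] at hHold
    rw [one_div_one_div] at hHold
    rw [← Finset.sum_congr rfl (fun v _ => hfg v)] at hHold
    -- bounds for the two factors
    have hsum1nn : 0 ≤ ∑ v ∈ s, P v * Real.exp (lam * cs v) :=
      Finset.sum_nonneg fun v _ => mul_nonneg (hPP _ _) (Real.exp_pos _).le
    have hb1 : ∑ v ∈ s, P v * Real.exp (lam * cs v) ≤ Real.exp (lam * (c * n)) := by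
      refine le_trans ?_ hSAn
      rw [hSAdef]
      exact Finset.sum_le_sum_of_subset_of_nonneg (Finset.filter_subset _ _)
        (fun v _ _ => mul_nonneg (hPP _ _) (Real.exp_pos _).le)
    have hsum2nn : 0 ≤ ∑ v ∈ s, P v := Finset.sum_nonneg fun v _ => hPP _ _
    have hb2 : ∑ v ∈ s, P v ≤ β₀ * β ^ n := by
      have hstep : ∀ u : Fin m → A × S,
          (∑ q : A × S, if Φ (Fin.snoc u q) then P (Fin.snoc u q) else 0) ≤
            (if (∀ t : Fin m, (u t).2 ≠ z) then
              pathProb Adm p π x (List.ofFn u) else 0) := by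
        intro u
        by_cases hu : ∀ t : Fin m, (u t).2 ≠ z
        · rw [if_pos hu, ← sum_pathProb_snoc hp π x m u]
          refine Finset.sum_le_sum fun q _ => ?_
          split
          · exact le_refl _
          · exact hPP _ _
        · rw [if_neg hu]
          push_neg at hu
          obtain ⟨t, ht⟩ := hu
          have hnone : ∀ q : A × S, ¬ Φ (Fin.snoc u q) := by
            intro q hΦq
            obtain ⟨-, h2, -⟩ := hΦq
            have h3 := h2 (Fin.castSucc t) (by
              simp only [Fin.coe_castSucc]
              have := t.isLt; omega)
            rw [Fin.snoc_castSucc] at h3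
            exact h3 ht
          rw [Finset.sum_congr rfl (fun q _ => if_neg (hnone q))]
          simp
      calc ∑ v ∈ s, P v = ∑ v : Fin n → A × S, if Φ v then P v else 0 :=
            Finset.sum_filter _ _
        _ = ∑ u : Fin m → A × S, ∑ q : A × S,
              if Φ (Fin.snoc u q) then P (Fin.snoc u q) else 0 :=
            sum_fn_succ m (fun v => if Φ v then P v else 0)
        _ ≤ ∑ u : Fin m → A × S, (if (∀ t : Fin m, (u t).2 ≠ z) then
              pathProb Adm p π x (List.ofFn u) else 0) :=
            Finset.sum_le_sum fun u _ => hstep u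
        _ = survProb Adm p π x z m := by
            simp only [survProb, cylProb]
            refine Finset.sum_congr rfl fun u _ => ?_
            by_cases h : ∀ t : Fin m, (u t).2 ≠ z
            · rw [if_pos h, if_pos h]
            · rw [if_neg h, if_neg h]
        _ ≤ β₀ * β ^ (m + 1) := hTail x π m
    -- put everything together
    have hmain : ∑ v ∈ s, P v * Real.exp (lam * α * cs v) ≤
        Real.exp (lam * (c * n)) ^ α * (β₀ * β ^ n) ^ (1 - α) := by
      refine le_trans hHold ?_
      have h1 : (∑ v ∈ s, P v * Real.exp (lam * cs v)) ^ α ≤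
          Real.exp (lam * (c * n)) ^ α := Real.rpow_le_rpow hsum1nn hb1 hα0.le
      have h2 : (∑ v ∈ s, P v) ^ (1 - α) ≤ (β₀ * β ^ n) ^ (1 - α) :=
        Real.rpow_le_rpow hsum2nn hb2 (by linarith)
      exact mul_le_mul h1 h2 (Real.rpow_nonneg hsum2nn _)
        (Real.rpow_nonneg (Real.exp_pos _).le _)
    have hDpos : 0 < D := Real.exp_pos _
    have hfinal : D * (Real.exp (lam * (c * n)) ^ α * (β₀ * β ^ n) ^ (1 - α)) =
        K * r ^ n := by
      have e1 : D * Real.exp (lam * (c * n)) ^ α =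
          Real.exp (lam * α * (ε + δ)) ^ n := by
        rw [hDdef, ← Real.exp_mul, ← Real.exp_add,
          show -(lam * α * (γ * (n : ℝ))) + lam * (c * (n : ℝ)) * α =
            (n : ℝ) * (lam * α * (ε + δ)) by rw [hc]; ring,
          Real.exp_nat_mul]
      have e2 : (β₀ * β ^ n) ^ (1 - α) = K * (β ^ (1 - α)) ^ n := by
        rw [Real.mul_rpow hβ₀.le (pow_nonneg hβpos.le n), hKdef]
        congr 1
        rw [← Real.rpow_natCast β n, ← Real.rpow_natCast (β ^ (1 - α)) n,
          ← Real.rpow_mul hβpos.le, ← Real.rpow_mul hβpos.le, mul_comm]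
      rw [show D * (Real.exp (lam * (c * ↑n)) ^ α * (β₀ * β ^ n) ^ (1 - α)) =
        (D * Real.exp (lam * (c * ↑n)) ^ α) * (β₀ * β ^ n) ^ (1 - α) by ring,
        e1, e2, hrdef, mul_pow]
      ring
    calc T n = D * ∑ v : Fin n → A × S,
          (if Φ v then P v * Real.exp (lam * α * cs v) else 0) := hTn
      _ = D * ∑ v ∈ s, P v * Real.exp (lam * α * cs v) := by rw [hfilter]
      _ ≤ D * (Real.exp (lam * (c * n)) ^ α * (β₀ * β ^ n) ^ (1 - α)) :=
          mul_le_mul_of_nonneg_left hmain hDpos.le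
      _ = K * r ^ n := hfinal
  -- summability of T
  have hgeo : Summable (fun k : ℕ => (K * r ^ N) * r ^ k) :=
    (summable_geometric_of_lt_one hr0 hr1).mul_left _
  have hshift : Summable (fun k : ℕ => T (k + N)) := by
    refine Summable.of_nonneg_of_le (fun k => hT0 _) (fun k => ?_) hgeo
    calc T (k + N) ≤ K * r ^ (k + N) := hTb _ (by omega)
      _ = K * r ^ N * r ^ k := by rw [pow_add]; ring
  have hTsummable : Summable T := (summable_nat_add_iff N).1 hshift
  -- conclusion
  have hEeq : EhitExp Adm p π x z
      (fun s a => lam * α * (C s a - γ)) = ∑' n : ℕ, ENNReal.ofReal (T n) := by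
    unfold EhitExp EexitExp
    refine tsum_congr fun n => ?_
    rw [hTdef]
    rw [ENNReal.ofReal_sum_of_nonneg (fun v _ => by
      split
      · exact mul_nonneg (hPP _ _) (Real.exp_pos _).le
      · exact le_refl 0)]
    refine Finset.sum_congr rfl fun v _ => ?_
    split <;> simp
  rw [hEeq, ← ENNReal.ofReal_tsum_of_nonneg hT0 hTsummable]
  exact ENNReal.ofReal_lt_top

end RiskSensitive
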